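/- For all integers q ≥ 2 and n ≥ 1, and under each of the scenarios (∗•) and (••), the whole set F_q is n-cell implementable if and only if q ≤ 2n. -/

import Mathlib

/-- The alphabet 𝔹• = {0, 1, ∗, •}. -/
inductive BB : Type
  | zero
  | one
  | star
  | reject
deriving DecidableEq

instance instFintypeBB : Fintype BB where
  elems := {BB.zero, BB.one, BB.star, BB.reject}
  complete := by intro x; cases x <;> simp

/-- The cell function T : 𝔹• × 𝔹• → 𝔹: T(u,ϑ) = 1 iff u = ∗, or ϑ = ∗,
or u,ϑ ∈ 𝔹 with u = ϑ. -/
def Tcell : BB → BB → Bool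
  | BB.star, _ => true
  | _, BB.star => true
  | BB.zero, BB.zero => true
  | BB.one, BB.one => true
  | _, _ => false

/-- The word-level function T(u,ϑ) = ⋀_{j<n} T(u_j, ϑ_j). -/
def Tword {n : ℕ} (u θ : Fin n → BB) : Bool :=
  decide (∀ j, Tcell (u j) (θ j) = true)

/-- The alphabet 𝔹 = {0,1} ⊆ 𝔹•. -/
def Bcirc : Set BB := {BB.zero, BB.one}

/-- The alphabet 𝔹∗ = {0,1,∗} ⊆ 𝔹•. -/
def Bstar : Set BB := {BB.zero, BB.one, BB.star}

/-- The full alphabet 𝔹•. -/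
def Bdot : Set BB := Set.univ

/-- A family Φ of functions {0,…,q−1} → 𝔹 is n-cell implementable under
scenario (A,B) if there are mappings u : {0,…,q−1} → A^n and ϑ : Φ → B^n
with f(x) = T(u(x), ϑ(f)) for all f ∈ Φ and x. -/
def Implementable (A B : Set BB) (n q : ℕ) (Φ : Set (Fin q → Bool)) : Prop :=
  ∃ u : Fin q → Fin n → BB, ∃ θ : (Fin q → Bool) → Fin n → BB,
    (∀ x j, u x j ∈ A) ∧ (∀ f ∈ Φ, ∀ j, θ f j ∈ B) ∧
    (∀ f ∈ Φ, ∀ x, f x = Tword (u x) (θ f))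

/-- The family 𝓔_q = { x ↦ [x = t] : t ∈ [q⟩ }. -/
def Eset (q : ℕ) : Set (Fin q → Bool) :=
  { f | ∃ t : Fin q, f = fun x => decide (x = t) }

/-- The family 𝓝_q = { x ↦ [x ≠ t] : t ∈ [q⟩ }. -/
def Nset (q : ℕ) : Set (Fin q → Bool) :=
  { f | ∃ t : Fin q, f = fun x => decide (x ≠ t) }

/-- The family 𝓖_q = { x ↦ [x ≥ t] : t ∈ [q⟩ }. -/
def Gset (q : ℕ) : Set (Fin q → Bool) :=
  { f | ∃ t : Fin q, f = fun x => decide (t ≤ x) }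

/-- The family 𝓛_q = { x ↦ [x ≤ t] : t ∈ [q⟩ }. -/
def Lset (q : ℕ) : Set (Fin q → Bool) :=
  { f | ∃ t : Fin q, f = fun x => decide (x ≤ t) }

/-- Embed a bit into 𝔹•. -/
def bitBB : Bool → BB
  | false => BB.zero
  | true => BB.one

/-- Encode two desired answers into a ϑ-symbol. -/
def tcode : Bool → Bool → BB
  | true, true => BB.star
  | true, false => BB.zero
  | false, true => BB.one
  | false, false => BB.reject

lemma tcell_star (v : BB) : Tcell BB.star v = true := by cases v <;> rfl

lemma tcell_tcode (b g0 g1 : Bool) :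
    Tcell (bitBB b) (tcode g0 g1) = if b then g1 else g0 := by
  cases b <;> cases g0 <;> cases g1 <;> rfl

/-- extend f to ℕ -/
def fv {q : ℕ} (f : Fin q → Bool) (i : ℕ) : Bool :=
  if h : i < q then f ⟨i, h⟩ else true

lemma nec_aux (q n : ℕ) (h : Implementable Bdot Bdot n q Set.univ) : q ≤ 2 * n := by
  obtain ⟨u, θ, _, _, hT⟩ := h
  have hsurj : Function.Surjective (fun (v : Fin n → BB) (x : Fin q) => Tword (u x) v) := by
    intro f
    exact ⟨θ f, by funext x; exact (hT f trivial x).symm⟩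
  have hcard := Fintype.card_le_of_surjective _ hsurj
  have c1 : Fintype.card (Fin q → Bool) = 2 ^ q := by simp
  have c2 : Fintype.card (Fin n → BB) = 4 ^ n := by
    simp [Fintype.card_fun]
    rfl
  rw [c1, c2] at hcard
  have : (2 : ℕ) ^ q ≤ 2 ^ (2 * n) := by
    calc (2:ℕ) ^ q ≤ 4 ^ n := hcard
    _ = 2 ^ (2 * n) := by rw [pow_mul]; norm_num
  exact (Nat.pow_le_pow_iff_right (by norm_num : 1 < 2)).mp this

lemma suff_aux (q n : ℕ) (h : q ≤ 2 * n) : Implementable Bstar Bdot n q Set.univ := by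
  have hdiv : ∀ x : Fin q, (x : ℕ) / 2 < n := by
    intro x
    have : (x : ℕ) < 2 * n := lt_of_lt_of_le x.isLt h
    omega
  refine ⟨fun x j => if ((x : ℕ) / 2 = (j : ℕ)) then bitBB (decide ((x:ℕ) % 2 = 1)) else BB.star,
    fun f j => tcode (fv f (2 * j)) (fv f (2 * j + 1)), ?_, ?_, ?_⟩
  · intro x j
    dsimp only
    split
    · cases (decide ((x:ℕ) % 2 = 1)) <;> simp [bitBB, Bstar]
    · simp [Bstar]
  · intro f _ j; trivial
  · intro f _ x
    unfold Tword
    have key : ∀ j : Fin n,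
        Tcell (if ((x : ℕ) / 2 = (j : ℕ)) then bitBB (decide ((x:ℕ) % 2 = 1)) else BB.star)
          (tcode (fv f (2 * j)) (fv f (2 * j + 1)))
        = if ((x : ℕ) / 2 = (j : ℕ)) then f x else true := by
      intro j
      split
      · next hj =>
        rw [tcell_tcode]
        have hx : 2 * (j : ℕ) + (x : ℕ) % 2 = (x : ℕ) := by omega
        rcases Nat.mod_two_eq_zero_or_one (x : ℕ) with hm | hm
        · have h2 : 2 * (j : ℕ) = (x : ℕ) := by omega
          simp [hm, fv, h2, x.isLt]
        · have h2 : 2 * (j : ℕ) + 1 = (x : ℕ) := by omega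
          simp [hm, fv, h2, x.isLt]
      · exact tcell_star _
    rcases hb : f x with _ | _
    · -- f x = false : the product must be false
      have : ¬ (∀ j : Fin n, Tcell (if ((x : ℕ) / 2 = (j : ℕ)) then bitBB (decide ((x:ℕ) % 2 = 1)) else BB.star)
          (tcode (fv f (2 * j)) (fv f (2 * j + 1))) = true) := by
        intro hall
        have := hall ⟨(x : ℕ) / 2, hdiv x⟩
        rw [key] at this
        simp at this
        rw [hb] at this
        exact Bool.false_ne_true this
      simp [this]
    · have : ∀ j : Fin n, Tcell (if ((x : ℕ) / 2 = (j : ℕ)) then bitBB (decide ((x:ℕ) % 2 = 1)) else BB.star)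
          (tcode (fv f (2 * j)) (fv f (2 * j + 1))) = true := by
        intro j
        rw [key]
        split
        · exact hb
        · rfl

      simp [this]

theorem Fset_implementable_starReject_rejectReject (q n : ℕ)
    (hq : 2 ≤ q) (hn : 1 ≤ n) :
    (Implementable Bstar Bdot n q Set.univ ↔ q ≤ 2 * n) ∧
    (Implementable Bdot Bdot n q Set.univ ↔ q ≤ 2 * n) := by
  have star_to_dot : Implementable Bstar Bdot n q Set.univ →
      Implementable Bdot Bdot n q Set.univ := by
    rintro ⟨u, θ, _, hθ, hT⟩
    exact ⟨u, θ, fun x j => trivial, hθ, hT⟩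
  constructor
  · exact ⟨fun h => nec_aux q n (star_to_dot h), suff_aux q n⟩
  · exact ⟨nec_aux q n, fun h => star_to_dot (suff_aux q n h)⟩
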